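/- Let A be an abelian group, g ∈ Aut(A), and define x ▷ y = x + g(y − x) on A (the affine crossed set (A,g)). Then the orbit of y under the inner group is y + Im(f), where f = id − g. In particular, (A,g) with A finite is indecomposable if and only if f = id − g is bijective. -/

import Mathlib

/-- A rack is indecomposable if it admits no decomposition into two nonempty subracks. -/
def RackIndecomposable (X : Type*) (op : X → X → X) : Prop :=
  ¬ ∃ Y : Set X, Y.Nonempty ∧ Yᶜ.Nonempty ∧
      (∀ a ∈ Y, ∀ b ∈ Y, op a b ∈ Y) ∧ (∀ a ∈ Yᶜ, ∀ b ∈ Yᶜ, op a b ∈ Yᶜ)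

/-- The subgroup of permutations `σ` with `σ z - z ∈ H` for all `z`. -/
def transK {A : Type*} [AddCommGroup A] (H : AddSubgroup A) : Subgroup (Equiv.Perm A) where
  carrier := {σ | ∀ z, σ z - z ∈ H}
  one_mem' := by intro z; simpa using H.zero_mem
  mul_mem' := by
    intro σ τ hσ hτ z
    have h : (σ * τ) z - z = (σ (τ z) - τ z) + (τ z - z) := by
      simp only [Equiv.Perm.mul_apply]; abel
    rw [h]; exact H.add_mem (hσ _) (hτ _)
  inv_mem' := by
    intro σ hσ z
    have h : σ⁻¹ z - z = -(σ (σ⁻¹ z) - σ⁻¹ z) := by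
      rw [show σ (σ⁻¹ z) = z from σ.apply_symm_apply z]; abel
    rw [h]; exact H.neg_mem (hσ _)

/-- finite injective image lemma -/
lemma img_eq {A : Type*} [Finite A] (e : A → A) (he : Function.Injective e)
    (T : Set A) (hT : Set.MapsTo e T T) : e '' T = T := by
  exact Set.eq_of_subset_of_ncard_le (Set.mapsTo_iff_image_subset.mp hT)
    (by rw [Set.ncard_image_of_injective T he]) (Set.toFinite T)

/-- In the affine crossed set `(A, g)` with `x ▷ y = x - g x + g y = x + g (y - x)`,
the orbit of `y` under the inner group (generated by the translations
`φ_x = (add (x - g x)) ∘ g`) is `y + Im (id - g)`; in particular for finite `A`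
the affine crossed set is indecomposable iff `id - g` is bijective. -/
theorem affine_orbits {A : Type*} [AddCommGroup A] (g : A ≃+ A) :
    (∀ y : A,
      {b : A | ∃ σ ∈ Subgroup.closure
          (Set.range fun x : A => g.toEquiv.trans (Equiv.addLeft (x - g x))),
        σ y = b} =
      {b : A | ∃ a : A, b = y + (a - g a)}) ∧
    (Finite A →
      (RackIndecomposable A (fun x y => x - g x + g y) ↔
        Function.Bijective fun a : A => a - g a)) := by
  classical
  set φ : A →+ A := AddMonoidHom.id A - (g : A →+ A) with hφdef
  have hφ : ∀ a, φ a = a - g a := fun a => rfl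
  set S : Set (Equiv.Perm A) :=
    Set.range fun x : A => g.toEquiv.trans (Equiv.addLeft (x - g x)) with hSdef
  have hgen : ∀ x y : A, (g.toEquiv.trans (Equiv.addLeft (x - g x))) y = x - g x + g y :=
    fun x y => rfl
  have hle : Subgroup.closure S ≤ transK φ.range := by
    rw [Subgroup.closure_le]
    rintro σ ⟨x, rfl⟩ z
    refine ⟨x - z, ?_⟩
    rw [hφ, hgen, map_sub]
    abel
  constructor
  · intro y
    ext b
    simp only [Set.mem_setOf_eq]
    constructor
    · rintro ⟨σ, hσ, rfl⟩
      obtain ⟨a, ha⟩ := hle hσ y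
      rw [hφ] at ha
      exact ⟨a, by rw [ha]; abel⟩
    · rintro ⟨a, rfl⟩
      refine ⟨g.toEquiv.trans (Equiv.addLeft ((a + y) - g (a + y))),
        Subgroup.subset_closure ⟨a + y, rfl⟩, ?_⟩
      rw [hgen, map_add]
      abel
  · intro hfin
    constructor
    · -- indecomposable → bijective
      intro hind
      rw [← Finite.injective_iff_bijective, Finite.injective_iff_surjective]
      by_contra hsurj
      simp only [Function.Surjective, not_forall] at hsurj
      obtain ⟨t, ht⟩ := hsurj
      push_neg at ht
      refine hind ⟨(φ.range : Set A), ⟨0, φ.range.zero_mem⟩, ⟨t, ?_⟩, ?_, ?_⟩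
      · rintro ⟨a, ha⟩
        exact ht a (by rw [← hφ a]; exact ha)
      · rintro a - b ⟨d, hd⟩
        refine ⟨a + d - φ d, ?_⟩
        show φ (a + d - φ d) = a - g a + g b
        rw [← hd]
        simp only [map_sub, map_add, hφ]
        abel
      · rintro a ha b hb
        simp only [Set.mem_compl_iff] at *
        rintro ⟨c, hc⟩
        refine hb ⟨c - a + b, ?_⟩
        show φ (c - a + b) = b
        rw [map_add, map_sub, hc]
        simp only [hφ, map_add]
        abel
    · -- bijective → indecomposable
      rintro ⟨hinj, hsurj⟩ ⟨Y, ⟨y0, hy0⟩, ⟨z0, hz0⟩, hY, hYc⟩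
      have hinj' : ∀ a : A, Function.Injective (fun z : A => a - g a + g z) := by
        intro a u v h
        exact g.injective (add_left_cancel h)
      have hiff : ∀ a x : A, (a - g a + g x ∈ Y ↔ x ∈ Y) := by
        intro a x
        by_cases ha : a ∈ Y
        · have heq : (fun z : A => a - g a + g z) '' Y = Y :=
            img_eq _ (hinj' a) Y (fun z hz => hY a ha z hz)
          constructor
          · intro hx
            rw [← heq] at hx
            obtain ⟨w, hw, hwe⟩ := hx
            rwa [← hinj' a hwe]
          · exact hY a ha x
        · have ha' : a ∈ Yᶜ := ha
          have heq : (fun z : A => a - g a + g z) '' Yᶜ = Yᶜ :=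
            img_eq _ (hinj' a) Yᶜ (fun z hz => hYc a ha' z hz)
          constructor
          · intro hx
            by_contra hx'
            exact (hYc a ha' x hx') hx
          · intro hx
            by_contra hx'
            have hx'' : a - g a + g x ∈ Yᶜ := hx'
            rw [← heq] at hx''
            obtain ⟨w, hw, hwe⟩ := hx''
            exact ((hinj' a hwe) ▸ hw) hx
      obtain ⟨a, ha⟩ := hsurj (z0 - y0)
      have key := hiff (a + y0) y0
      have : (a + y0) - g (a + y0) + g y0 = z0 := by
        rw [map_add]
        have : a - g a = z0 - y0 := ha
        rw [show (a + y0) - (g a + g y0) + g y0 = (a - g a) + y0 by abel, this]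
        abel
      rw [this] at key
      exact hz0 (key.mpr hy0)
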